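/- Let γ, β, θ ∈ M₀(Ω) with θ(x) ≥ γ(x) + β(x) + ε₀ a.e. for some ε₀ > 0. For u in the nonlinear class S_{1,γ(x),β(x),θ(x)}(Ω), set λ_u = [u]_{S_{γ,β,θ}} (the pseudo-norm) and ℜ(u) = ∫_Ω |u|^{θ(x)} dx + Σᵢ ∫_Ω |u|^{γ(x)} |D_i u|^{β(x)} dx (the modular). Then min{λ_u^{γ⁻+β⁻}, λ_u^{θ⁺}} ≤ ℜ(u) ≤ max{λ_u^{γ⁻+β⁻}, λ_u^{θ⁺}}. -/

import Mathlib

open MeasureTheory ENNReal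

noncomputable def modularS {n : ℕ} (Ω : Set (Fin n → ℝ)) (γ β θ : (Fin n → ℝ) → ℝ)
    (u : (Fin n → ℝ) → ℝ) (Du : Fin n → (Fin n → ℝ) → ℝ) : ℝ≥0∞ :=
  (∫⁻ x in Ω, ENNReal.ofReal (|u x| ^ θ x))
    + ∑ i : Fin n, ∫⁻ x in Ω, ENNReal.ofReal (|u x| ^ γ x * |Du i x| ^ β x)

/-- The scaled modular `R(l)`. -/
noncomputable def RlS {n : ℕ} (Ω : Set (Fin n → ℝ)) (γ β θ : (Fin n → ℝ) → ℝ)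
    (u : (Fin n → ℝ) → ℝ) (Du : Fin n → (Fin n → ℝ) → ℝ) (l : ℝ) : ℝ≥0∞ :=
  (∫⁻ x in Ω, ENNReal.ofReal (|u x / l| ^ θ x))
    + ∑ i : Fin n, ∫⁻ x in Ω,
        ENNReal.ofReal ((|u x| ^ (γ x / β x) * |Du i x| / l ^ (γ x / β x + 1)) ^ β x)

noncomputable def pseudoNormS {n : ℕ} (Ω : Set (Fin n → ℝ)) (γ β θ : (Fin n → ℝ) → ℝ)
    (u : (Fin n → ℝ) → ℝ) (Du : Fin n → (Fin n → ℝ) → ℝ) : ℝ :=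
  sInf {l : ℝ | 0 < l ∧
    (∫⁻ x in Ω, ENNReal.ofReal (|u x / l| ^ θ x))
      + ∑ i : Fin n, ∫⁻ x in Ω,
          ENNReal.ofReal ((|u x| ^ (γ x / β x) * |Du i x| / l ^ (γ x / β x + 1)) ^ β x) ≤ 1}

lemma pseudoNormS_eq {n : ℕ} (Ω : Set (Fin n → ℝ)) (γ β θ : (Fin n → ℝ) → ℝ)
    (u : (Fin n → ℝ) → ℝ) (Du : Fin n → (Fin n → ℝ) → ℝ) :
    pseudoNormS Ω γ β θ u Du = sInf {l : ℝ | 0 < l ∧ RlS Ω γ β θ u Du l ≤ 1} := rfl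

lemma pt1 {a l t : ℝ} (hl : 0 < l) : |a / l| ^ t = |a| ^ t / l ^ t := by
  rw [abs_div, abs_of_pos hl, Real.div_rpow (abs_nonneg a) hl.le]

lemma pt2 {a b l g bb : ℝ} (ha : 0 ≤ a) (hb : 0 ≤ b) (hl : 0 < l) (hbb : 0 < bb) :
    (a ^ (g / bb) * b / l ^ (g / bb + 1)) ^ bb = a ^ g * b ^ bb / l ^ (g + bb) := by
  rw [Real.div_rpow (by positivity) (by positivity),
      Real.mul_rpow (by positivity) hb, ← Real.rpow_mul ha, ← Real.rpow_mul hl.le,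
      div_mul_cancel₀ _ hbb.ne']
  congr 2
  field_simp

lemma scale_le {A p q : ℝ} (hA : 0 ≤ A) (hq : 0 < q) (h : p ≤ q) : p * (A / q) ≤ A := by
  calc p * (A / q) ≤ q * (A / q) := mul_le_mul_of_nonneg_right h (by positivity)
    _ = A := mul_div_cancel₀ A hq.ne'

lemma scale_ge {A p q : ℝ} (hA : 0 ≤ A) (hq : 0 < q) (h : q ≤ p) : A ≤ p * (A / q) := by
  calc A = q * (A / q) := (mul_div_cancel₀ A hq.ne').symm
    _ ≤ p * (A / q) := mul_le_mul_of_nonneg_right h (by positivity)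

lemma compA {n : ℕ} (Ω : Set (Fin n → ℝ)) (γ β θ : (Fin n → ℝ) → ℝ)
    (u : (Fin n → ℝ) → ℝ) (Du : Fin n → (Fin n → ℝ) → ℝ) {l c : ℝ} (hl : 0 < l)
    (hae : ∀ᵐ x ∂(volume.restrict Ω),
      0 < β x ∧ l ^ c ≤ l ^ θ x ∧ l ^ c ≤ l ^ (γ x + β x)) :
    ENNReal.ofReal (l ^ c) * RlS Ω γ β θ u Du l ≤ modularS Ω γ β θ u Du := by
  unfold RlS modularS
  rw [mul_add, Finset.mul_sum]
  refine add_le_add ?_ (Finset.sum_le_sum fun i _ => ?_)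
  · rw [← lintegral_const_mul' _ _ ofReal_ne_top]
    refine lintegral_mono_ae ?_
    filter_upwards [hae] with x ⟨hβx, ht, _⟩
    rw [← ENNReal.ofReal_mul (by positivity)]
    apply ENNReal.ofReal_le_ofReal
    rw [pt1 hl]
    exact scale_le (by positivity) (Real.rpow_pos_of_pos hl _) ht
  · rw [← lintegral_const_mul' _ _ ofReal_ne_top]
    refine lintegral_mono_ae ?_
    filter_upwards [hae] with x ⟨hβx, _, hgb⟩
    rw [← ENNReal.ofReal_mul (by positivity)]
    apply ENNReal.ofReal_le_ofReal
    rw [pt2 (abs_nonneg _) (abs_nonneg _) hl hβx]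
    exact scale_le (by positivity) (Real.rpow_pos_of_pos hl _) hgb

lemma compB {n : ℕ} (Ω : Set (Fin n → ℝ)) (γ β θ : (Fin n → ℝ) → ℝ)
    (u : (Fin n → ℝ) → ℝ) (Du : Fin n → (Fin n → ℝ) → ℝ) {l c : ℝ} (hl : 0 < l)
    (hae : ∀ᵐ x ∂(volume.restrict Ω),
      0 < β x ∧ l ^ θ x ≤ l ^ c ∧ l ^ (γ x + β x) ≤ l ^ c) :
    modularS Ω γ β θ u Du ≤ ENNReal.ofReal (l ^ c) * RlS Ω γ β θ u Du l := by
  unfold RlS modularS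
  rw [mul_add, Finset.mul_sum]
  refine add_le_add ?_ (Finset.sum_le_sum fun i _ => ?_)
  · rw [← lintegral_const_mul' _ _ ofReal_ne_top]
    refine lintegral_mono_ae ?_
    filter_upwards [hae] with x ⟨hβx, ht, _⟩
    rw [← ENNReal.ofReal_mul (by positivity)]
    apply ENNReal.ofReal_le_ofReal
    rw [pt1 hl]
    exact scale_ge (by positivity) (Real.rpow_pos_of_pos hl _) ht
  · rw [← lintegral_const_mul' _ _ ofReal_ne_top]
    refine lintegral_mono_ae ?_
    filter_upwards [hae] with x ⟨hβx, _, hgb⟩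
    rw [← ENNReal.ofReal_mul (by positivity)]
    apply ENNReal.ofReal_le_ofReal
    rw [pt2 (abs_nonneg _) (abs_nonneg _) hl hβx]
    exact scale_ge (by positivity) (Real.rpow_pos_of_pos hl _) hgb

open scoped Topology

theorem stmt8 {n : ℕ} (Ω : Set (Fin n → ℝ)) (hΩm : MeasurableSet Ω)
    (hΩb : Bornology.IsBounded Ω)
    (γ β θ : (Fin n → ℝ) → ℝ) (hγ : Measurable γ) (hβ : Measurable β) (hθ : Measurable θ)
    (gm bm tp : ℝ) (hgm1 : 1 ≤ gm) (hbm1 : 1 ≤ bm)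
    (hbd : ∀ᵐ x ∂(volume.restrict Ω), gm ≤ γ x ∧ bm ≤ β x ∧ θ x ≤ tp)
    (ε₀ : ℝ) (hε₀ : 0 < ε₀)
    (hθge : ∀ᵐ x ∂(volume.restrict Ω), γ x + β x + ε₀ ≤ θ x)
    (u : (Fin n → ℝ) → ℝ) (hu : Measurable u)
    (Du : Fin n → (Fin n → ℝ) → ℝ) (hDu : ∀ i, Measurable (Du i))
    (hmem : modularS Ω γ β θ u Du < ⊤) :
    ENNReal.ofReal (min (pseudoNormS Ω γ β θ u Du ^ (gm + bm))
        (pseudoNormS Ω γ β θ u Du ^ tp))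
      ≤ modularS Ω γ β θ u Du ∧
    modularS Ω γ β θ u Du
      ≤ ENNReal.ofReal (max (pseudoNormS Ω γ β θ u Du ^ (gm + bm))
          (pseudoNormS Ω γ β θ u Du ^ tp)) := by
  set lam := pseudoNormS Ω γ β θ u Du with hlamdef
  set M := modularS Ω γ β θ u Du with hMdef
  set S : Set ℝ := {l : ℝ | 0 < l ∧ RlS Ω γ β θ u Du l ≤ 1} with hSdef
  have hlamS : lam = sInf S := pseudoNormS_eq Ω γ β θ u Du
  have hagm : 0 < gm + bm := by linarith
  by_cases h0 : volume Ω = 0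
  · -- degenerate case: Ω is null
    have hres : volume.restrict Ω = 0 := Measure.restrict_eq_zero.mpr h0
    have hM0 : M = 0 := by
      rw [hMdef]; unfold modularS; simp [hres]
    have hS : S = Set.Ioi (0 : ℝ) := by
      ext l
      simp only [hSdef, Set.mem_setOf_eq, Set.mem_Ioi]
      constructor
      · exact fun h => h.1
      · intro h
        refine ⟨h, ?_⟩
        unfold RlS
        simp [hres]
    have hlam0 : lam = 0 := by rw [hlamS, hS, csInf_Ioi]
    constructor
    · rw [hM0]
      have : min (lam ^ (gm + bm)) (lam ^ tp) ≤ 0 := by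
        rw [hlam0, Real.zero_rpow hagm.ne']
        exact min_le_left _ _
      calc ENNReal.ofReal (min (lam ^ (gm + bm)) (lam ^ tp))
          ≤ ENNReal.ofReal 0 := ENNReal.ofReal_le_ofReal this
        _ = 0 := ENNReal.ofReal_zero
    · rw [hM0]; exact zero_le
  · -- main case
    have hres : volume.restrict Ω ≠ 0 := fun h => h0 (Measure.restrict_eq_zero.mp h)
    have hne : (ae (volume.restrict Ω)).NeBot := ae_neBot.mpr hres
    obtain ⟨x₀, ⟨hg0, hb0, ht0⟩, hθ0⟩ := (hbd.and hθge).exists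
    have htp2 : 0 < tp := by linarith
    have haeS : ∀ᵐ x ∂(volume.restrict Ω), 0 < β x ∧ gm + bm ≤ θ x ∧
        gm + bm ≤ γ x + β x ∧ θ x ≤ tp ∧ γ x + β x ≤ tp := by
      filter_upwards [hbd, hθge] with x ⟨h1, h2, h3⟩ h4
      refine ⟨by linarith, by linarith, by linarith, h3, by linarith⟩
    -- four comparison facts
    have hA1 : ∀ l : ℝ, 1 ≤ l →
        ENNReal.ofReal (l ^ (gm + bm)) * RlS Ω γ β θ u Du l ≤ M := by
      intro l hl
      refine compA Ω γ β θ u Du (by linarith) ?_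
      filter_upwards [haeS] with x ⟨hb, h1, h2, _, _⟩
      exact ⟨hb, Real.rpow_le_rpow_of_exponent_le hl h1,
        Real.rpow_le_rpow_of_exponent_le hl h2⟩
    have hA2 : ∀ l : ℝ, 0 < l → l ≤ 1 →
        ENNReal.ofReal (l ^ tp) * RlS Ω γ β θ u Du l ≤ M := by
      intro l hl0 hl1
      refine compA Ω γ β θ u Du hl0 ?_
      filter_upwards [haeS] with x ⟨hb, _, _, h3, h4⟩
      exact ⟨hb, Real.rpow_le_rpow_of_exponent_ge hl0 hl1 h3,
        Real.rpow_le_rpow_of_exponent_ge hl0 hl1 h4⟩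
    have hB1 : ∀ l : ℝ, 1 ≤ l →
        M ≤ ENNReal.ofReal (l ^ tp) * RlS Ω γ β θ u Du l := by
      intro l hl
      refine compB Ω γ β θ u Du (by linarith) ?_
      filter_upwards [haeS] with x ⟨hb, _, _, h3, h4⟩
      exact ⟨hb, Real.rpow_le_rpow_of_exponent_le hl h3,
        Real.rpow_le_rpow_of_exponent_le hl h4⟩
    have hB2 : ∀ l : ℝ, 0 < l → l ≤ 1 →
        M ≤ ENNReal.ofReal (l ^ (gm + bm)) * RlS Ω γ β θ u Du l := by
      intro l hl0 hl1
      refine compB Ω γ β θ u Du hl0 ?_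
      filter_upwards [haeS] with x ⟨hb, h1, h2, _, _⟩
      exact ⟨hb, Real.rpow_le_rpow_of_exponent_ge hl0 hl1 h1,
        Real.rpow_le_rpow_of_exponent_ge hl0 hl1 h2⟩
    -- S is nonempty
    have hSne : S.Nonempty := by
      set L : ℝ := max 1 M.toReal with hLdef
      have hL1 : (1 : ℝ) ≤ L := le_max_left _ _
      have hML : M ≤ ENNReal.ofReal (L ^ (gm + bm)) := by
        calc M = ENNReal.ofReal M.toReal := (ENNReal.ofReal_toReal hmem.ne).symm
          _ ≤ ENNReal.ofReal L := ENNReal.ofReal_le_ofReal (le_max_right _ _)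
          _ ≤ ENNReal.ofReal (L ^ (gm + bm)) := by
              refine ENNReal.ofReal_le_ofReal ?_
              calc L = L ^ (1 : ℝ) := (Real.rpow_one L).symm
                _ ≤ L ^ (gm + bm) :=
                    Real.rpow_le_rpow_of_exponent_le hL1 (by linarith)
      have hpos : ENNReal.ofReal (L ^ (gm + bm)) ≠ 0 :=
        (ENNReal.ofReal_pos.mpr (by positivity)).ne'
      have hRL : RlS Ω γ β θ u Du L ≤ 1 := by
        have h := (hA1 L hL1).trans hML
        rw [show ENNReal.ofReal (L ^ (gm + bm)) =
          ENNReal.ofReal (L ^ (gm + bm)) * 1 from (mul_one _).symm] at h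
        exact (ENNReal.mul_le_mul_iff_right hpos ofReal_ne_top).mp (by simpa using h)
      exact ⟨L, by linarith, hRL⟩
    have hbdd : BddBelow S := ⟨0, fun l hl => hl.1.le⟩
    have hlam0 : 0 ≤ lam := hlamS ▸ le_csInf hSne fun l hl => hl.1.le
    constructor
    · -- lower bound
      rcases eq_or_lt_of_le hlam0 with heq | hlampos
      · rw [← heq, Real.zero_rpow hagm.ne', Real.zero_rpow htp2.ne']
        simp
      · have key_lo : ∀ l : ℝ, 0 < l → l < lam →
            ENNReal.ofReal (min (l ^ (gm + bm)) (l ^ tp)) ≤ M := by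
          intro l hl hllam
          have hnot : ¬ RlS Ω γ β θ u Du l ≤ 1 := by
            intro hmemS
            exact absurd (hlamS ▸ csInf_le hbdd ⟨hl, hmemS⟩) (not_le.mpr hllam)
          have h1R : 1 ≤ RlS Ω γ β θ u Du l := (not_le.mp hnot).le
          rcases le_total 1 l with h | h
          · calc ENNReal.ofReal (min (l ^ (gm + bm)) (l ^ tp))
                ≤ ENNReal.ofReal (l ^ (gm + bm)) :=
                  ENNReal.ofReal_le_ofReal (min_le_left _ _)
              _ = ENNReal.ofReal (l ^ (gm + bm)) * 1 := (mul_one _).symm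
              _ ≤ ENNReal.ofReal (l ^ (gm + bm)) * RlS Ω γ β θ u Du l :=
                  mul_le_mul_right h1R _
              _ ≤ M := hA1 l h
          · calc ENNReal.ofReal (min (l ^ (gm + bm)) (l ^ tp))
                ≤ ENNReal.ofReal (l ^ tp) :=
                  ENNReal.ofReal_le_ofReal (min_le_right _ _)
              _ = ENNReal.ofReal (l ^ tp) * 1 := (mul_one _).symm
              _ ≤ ENNReal.ofReal (l ^ tp) * RlS Ω γ β θ u Du l :=
                  mul_le_mul_right h1R _
              _ ≤ M := hA2 l hl h
        have hcont : ContinuousAt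
            (fun l : ℝ => ENNReal.ofReal (min (l ^ (gm + bm)) (l ^ tp))) lam :=
          (ENNReal.continuous_ofReal.continuousAt).comp
            ((Real.continuousAt_rpow_const lam (gm + bm) (Or.inr hagm.le)).min
              (Real.continuousAt_rpow_const lam tp (Or.inr htp2.le)))
        refine le_of_tendsto (hcont.tendsto.mono_left nhdsWithin_le_nhds :
          Filter.Tendsto _ (𝓝[<] lam) _) ?_
        filter_upwards [Ioo_mem_nhdsLT hlampos]
          with l hl
        exact key_lo l hl.1 hl.2
    · -- upper bound
      have key_up : ∀ l, l ∈ S →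
          M ≤ ENNReal.ofReal (max (l ^ (gm + bm)) (l ^ tp)) := by
        rintro l ⟨hl, hRl⟩
        rcases le_total 1 l with h | h
        · calc M ≤ ENNReal.ofReal (l ^ tp) * RlS Ω γ β θ u Du l := hB1 l h
            _ ≤ ENNReal.ofReal (l ^ tp) * 1 := mul_le_mul_right hRl _
            _ = ENNReal.ofReal (l ^ tp) := mul_one _
            _ ≤ ENNReal.ofReal (max (l ^ (gm + bm)) (l ^ tp)) :=
                ENNReal.ofReal_le_ofReal (le_max_right _ _)
        · calc M ≤ ENNReal.ofReal (l ^ (gm + bm)) * RlS Ω γ β θ u Du l := hB2 l hl h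
            _ ≤ ENNReal.ofReal (l ^ (gm + bm)) * 1 := mul_le_mul_right hRl _
            _ = ENNReal.ofReal (l ^ (gm + bm)) := mul_one _
            _ ≤ ENNReal.ofReal (max (l ^ (gm + bm)) (l ^ tp)) :=
                ENNReal.ofReal_le_ofReal (le_max_left _ _)
      have hcont : ContinuousAt
          (fun l : ℝ => ENNReal.ofReal (max (l ^ (gm + bm)) (l ^ tp))) lam :=
        (ENNReal.continuous_ofReal.continuousAt).comp
          ((Real.continuousAt_rpow_const lam (gm + bm) (Or.inr hagm.le)).max
            (Real.continuousAt_rpow_const lam tp (Or.inr htp2.le)))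
      refine ge_of_tendsto (hcont.tendsto.mono_left nhdsWithin_le_nhds :
        Filter.Tendsto _ (𝓝[>] lam) _) ?_
      filter_upwards [self_mem_nhdsWithin] with l hl
      obtain ⟨m, hmS, hml⟩ := (csInf_lt_iff hbdd hSne).mp (hlamS ▸ hl : sInf S < l)
      refine (key_up m hmS).trans (ENNReal.ofReal_le_ofReal ?_)
      exact max_le_max (Real.rpow_le_rpow hmS.1.le hml.le hagm.le)
        (Real.rpow_le_rpow hmS.1.le hml.le htp2.le)
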